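/- Among all real polynomials p of degree at most d with |p(x)| ≤ 1 on [-1,1], the value |p(y)| for any fixed y > 1 is at most T_d(y), where T_d is the Chebyshev polynomial of the first kind. -/

import Mathlib

open Polynomial Polynomial.Chebyshev Real

lemma T_natDegree_le' : ∀ n : ℕ, (T ℝ n).natDegree ≤ n ∧ (T ℝ (n+1 : ℕ)).natDegree ≤ n+1 := by
  intro n
  induction n with
  | zero => constructor <;> simp [T_zero, T_one]
  | succ k ih =>
    refine ⟨ih.2, ?_⟩
    have h : ((k+1+1 : ℕ) : ℤ) = (k : ℤ) + 2 := by push_cast; ring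
    rw [h, T_add_two]
    refine (natDegree_sub_le _ _).trans ?_
    have h1 : (2 * X * T ℝ ((k:ℤ)+1)).natDegree ≤ k + 2 := by
      refine (natDegree_mul_le).trans ?_
      have : (2 * X : ℝ[X]).natDegree ≤ 1 := natDegree_mul_le.trans (by simp)
      have h2 : (T ℝ ((k:ℤ)+1)).natDegree ≤ k + 1 := by
        have := ih.2; push_cast at this ⊢; exact_mod_cast this
      omega
    have h0 : (T ℝ (k:ℤ)).natDegree ≤ k := ih.1
    omega

lemma T_natDegree_le (n : ℕ) : (T ℝ n).natDegree ≤ n := (T_natDegree_le' n).1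

lemma T_one_le {x : ℝ} (hx : 1 ≤ x) : ∀ n : ℕ, 1 ≤ (T ℝ n).eval x ∧ (T ℝ n).eval x ≤ (T ℝ (n+1 : ℕ)).eval x := by
  intro n
  induction n with
  | zero => constructor <;> simp [T_zero, T_one] <;> linarith
  | succ k ih =>
    have h1 : (1:ℝ) ≤ (T ℝ (k+1 : ℕ)).eval x := le_trans ih.1 ih.2
    refine ⟨h1, ?_⟩
    have h : ((k+1+1 : ℕ) : ℤ) = (k : ℤ) + 2 := by push_cast; ring
    have hk1 : ((k+1 : ℕ) : ℤ) = (k : ℤ) + 1 := by push_cast; ring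
    rw [h, hk1, T_add_two]
    rw [hk1] at h1
    simp only [eval_sub, eval_mul, eval_X, eval_ofNat]
    have h0 : (T ℝ (k:ℤ)).eval x ≤ (T ℝ ((k:ℤ)+1)).eval x := by
      have := ih.2; rwa [hk1] at this
    nlinarith

lemma cos_nat_mul_pi (m : ℕ) : Real.cos (m * π) = (-1:ℝ)^m := by
  have := Real.cos_int_mul_pi_sub 0 (m:ℤ)
  push_cast at this
  simpa using this

lemma cheb_aux (p : Polynomial ℝ) (d : ℕ) (y : ℝ)
    (hd : p.natDegree ≤ d)
    (hbound : ∀ x ∈ Set.Icc (-1 : ℝ) 1, |p.eval x| ≤ 1)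
    (hy : 1 < y) :
    p.eval y ≤ (T ℝ d).eval y := by
  by_contra hcon
  push_neg at hcon
  obtain rfl | hd0 := Nat.eq_zero_or_pos d
  · have hp : p = C (p.coeff 0) := Polynomial.eq_C_of_natDegree_le_zero hd
    have hb := hbound 0 (by norm_num)
    rw [hp] at hb hcon
    simp [T_zero] at hb hcon
    have := abs_le.1 hb
    linarith [this.2]
  have hdR : (0:ℝ) < d := by exact_mod_cast hd0
  have hT1 : 1 ≤ (T ℝ d).eval y := (T_one_le hy.le d).1
  set c : ℝ := p.eval y / (T ℝ d).eval y with hc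
  have hc1 : 1 < c := (one_lt_div (by linarith)).2 hcon
  set q : ℝ[X] := c • (T ℝ d) - p with hqdef
  have hqy : q.eval y = 0 := by
    simp only [hqdef, eval_sub, eval_smul, smul_eq_mul, hc]
    field_simp
    ring
  have hqdeg : q.natDegree ≤ d :=
    (natDegree_sub_le _ _).trans
      (max_le ((natDegree_smul_le _ _).trans (T_natDegree_le d)) hd)
  set θ : ℕ → ℝ := fun k => π - k * π / d with hθ
  set x : ℕ → ℝ := fun k => Real.cos (θ k) with hx
  have hθmem : ∀ k ≤ d, θ k ∈ Set.Icc 0 π := by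
    intro k hk
    have hk' : (k:ℝ) ≤ d := by exact_mod_cast hk
    constructor
    · have h1 : (k:ℝ) * π / d ≤ π := by
        rw [div_le_iff₀ hdR]
        nlinarith [Real.pi_pos]
      simp only [hθ]; linarith
    · have h1 : 0 ≤ (k:ℝ) * π / d := by positivity
      simp only [hθ]; linarith
  have hxlt : ∀ k l, k < l → l ≤ d → x k < x l := by
    intro k l hkl hld
    have h1 : θ l < θ k := by
      simp only [hθ]
      have hkl' : (k:ℝ) < l := by exact_mod_cast hkl
      have : (k:ℝ) * π / d < l * π / d := by
        apply div_lt_div_of_pos_right ?_ hdR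
        nlinarith [Real.pi_pos]
      linarith
    exact Real.strictAntiOn_cos (hθmem l hld) (hθmem k (by omega)) h1
  have hxmem : ∀ k, x k ∈ Set.Icc (-1:ℝ) 1 :=
    fun k => ⟨Real.neg_one_le_cos _, Real.cos_le_one _⟩
  set e : ℕ → ℝ := fun k => (-1:ℝ)^(d+k) with he_def
  have hTx : ∀ k ≤ d, (T ℝ d).eval (x k) = e k := by
    intro k hk
    have h1 : (T ℝ d).eval (x k) = Real.cos (d * θ k) := by
      rw [hx]; exact_mod_cast T_real_cos (θ k) d
    have hangle : (d:ℝ) * θ k = ((d - k : ℕ) : ℝ) * π := by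
      rw [Nat.cast_sub hk]
      simp only [hθ]
      field_simp
    rw [h1, hangle, _root_.cos_nat_mul_pi]
    simp only [he_def]
    rw [show d + k = (d - k) + 2*k by omega, pow_add, pow_mul]
    norm_num
  have hesq : ∀ k, e k * e k = 1 := by
    intro k
    simp only [he_def, ← pow_add]
    rw [show (d+k) + (d+k) = 2*(d+k) by ring, pow_mul]
    norm_num
  have hsign : ∀ k ≤ d, 0 < e k * q.eval (x k) := by
    intro k hk
    have hqx : q.eval (x k) = c * e k - p.eval (x k) := by
      simp [hqdef, hTx k hk]
    rw [hqx]
    have habs : |p.eval (x k)| ≤ 1 := hbound _ (hxmem k)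
    have heabs : |e k| = 1 := by simp [he_def]
    have h2 : e k * p.eval (x k) ≤ 1 := by
      calc e k * p.eval (x k) ≤ |e k * p.eval (x k)| := le_abs_self _
        _ = |p.eval (x k)| := by rw [abs_mul, heabs, one_mul]
        _ ≤ 1 := habs
    have h3 : e k * (c * e k) = c := by
      rw [show e k * (c * e k) = c * (e k * e k) by ring, hesq k, mul_one]
    nlinarith
  have hroot : ∀ k : ℕ, k < d → ∃ t ∈ Set.Ioo (x k) (x (k+1)), q.eval t = 0 := by
    intro k hk
    have h1 := hsign k (le_of_lt hk)
    have h2 := hsign (k+1) hk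
    have he : e (k+1) = - e k := by
      simp only [he_def, ← add_assoc, pow_succ]; ring
    have hlt : x k < x (k+1) := hxlt k (k+1) (by omega) hk
    have hcont : ContinuousOn (fun t => q.eval t) (Set.Icc (x k) (x (k+1))) :=
      (Polynomial.continuous q).continuousOn
    have hek : e k = 1 ∨ e k = -1 := by
      rcases Nat.even_or_odd (d+k) with h | h
      · left; simp [he_def, h.neg_one_pow]
      · right; simp [he_def, h.neg_one_pow]
    rcases hek with h | h
    · rw [h] at h1; rw [he, h] at h2
      have h0 : (0:ℝ) ∈ Set.Ioo (q.eval (x (k+1))) (q.eval (x k)) := ⟨by linarith, by linarith⟩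
      obtain ⟨t, ht, hqt⟩ := intermediate_value_Ioo' hlt.le hcont h0
      exact ⟨t, ht, hqt⟩
    · rw [h] at h1; rw [he, h] at h2
      have h0 : (0:ℝ) ∈ Set.Ioo (q.eval (x k)) (q.eval (x (k+1))) := ⟨by linarith, by linarith⟩
      obtain ⟨t, ht, hqt⟩ := intermediate_value_Ioo hlt.le hcont h0
      exact ⟨t, ht, hqt⟩
  choose t ht hq0 using hroot
  have hxd : x d = 1 := by
    have : θ d = 0 := by simp only [hθ]; field_simp; ring
    simp [hx, this]
  set f : Fin (d+1) → ℝ := fun i => if h : (i:ℕ) < d then t i h else y with hf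
  have hfmono : StrictMono f := by
    intro i j hij
    have hij' : (i:ℕ) < (j:ℕ) := hij
    have hjled : (j:ℕ) ≤ d := by omega
    by_cases hjd : (j:ℕ) < d
    · have hid : (i:ℕ) < d := by omega
      simp only [hf, dif_pos hjd, dif_pos hid]
      have h1 : t i hid < x ((i:ℕ)+1) := (ht i hid).2
      have h2 : x (j:ℕ) < t j hjd := (ht j hjd).1
      have h3 : x ((i:ℕ)+1) ≤ x (j:ℕ) := by
        rcases eq_or_lt_of_le (show (i:ℕ)+1 ≤ (j:ℕ) by omega) with h | h
        · rw [h]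
        · exact (hxlt _ _ h hjled).le
      linarith
    · have hjd' : (j:ℕ) = d := by omega
      have hid : (i:ℕ) < d := by omega
      simp only [hf, dif_neg hjd, dif_pos hid]
      have h1 : t i hid < x ((i:ℕ)+1) := (ht i hid).2
      have h3 : x ((i:ℕ)+1) ≤ x d := by
        rcases eq_or_lt_of_le (show (i:ℕ)+1 ≤ d by omega) with h | h
        · rw [h]
        · exact (hxlt _ _ h le_rfl).le
      rw [hxd] at h3
      linarith
  have hqzero : q = 0 := by
    apply Polynomial.eq_zero_of_natDegree_lt_card_of_eval_eq_zero q hfmono.injective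
    · intro i
      by_cases h : (i:ℕ) < d
      · simp only [hf, dif_pos h]; exact hq0 i h
      · simp only [hf, dif_neg h]; exact hqy
    · simp only [Fintype.card_fin]; omega
  have := hsign 0 (Nat.zero_le d)
  rw [hqzero] at this
  simp at this

theorem chebyshev_extremal
    (p : Polynomial ℝ) (d : ℕ) (y : ℝ)
    (hd : p.natDegree ≤ d)
    (hbound : ∀ x ∈ Set.Icc (-1 : ℝ) 1, |p.eval x| ≤ 1)
    (hy : 1 < y) :
    |p.eval y| ≤ (Polynomial.Chebyshev.T ℝ d).eval y := by
  have h1 := cheb_aux p d y hd hbound hy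
  have h2 := cheb_aux (-p) d y (by simpa using hd)
    (by intro x hx; simpa using hbound x hx) hy
  rw [Polynomial.eval_neg] at h2
  rw [abs_le]
  exact ⟨by linarith, h1⟩
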